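/- Let Γ' be a finite-index subgroup of a subgroup Γ ≤ GL_d(R). Then the proximal dimensions agree, r_{Γ'} = r_Γ, and the limit sets in the Grassmannian Gr(r_Γ, d) agree, L_{Γ'} = L_Γ. In particular, Γ satisfies property (S) if and only if Γ' does. -/

import Mathlib

noncomputable section

abbrev Euc (d : ℕ) := EuclideanSpace ℝ (Fin d)

/-- The algebra of (continuous) linear endomorphisms of `ℝ^d`. -/
abbrev Endo (d : ℕ) := Euc d →L[ℝ] Euc d

/-- The set of matrices underlying a subgroup of `GL_d(ℝ)`. -/
def carrierSet {d : ℕ} (Γ : Subgroup (Endo d)ˣ) : Set (Endo d) :=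
  (fun g : (Endo d)ˣ => (g : Endo d)) '' Γ

/-- The closure of `ℝ·S = {λ g : λ ∈ ℝ, g ∈ S}` in `End(ℝ^d)`. -/
def limPts {d : ℕ} (S : Set (Endo d)) : Set (Endo d) :=
  closure {f | ∃ (c : ℝ) (g : Endo d), g ∈ S ∧ f = c • g}

/-- The rank of an endomorphism. -/
def rk {d : ℕ} (f : Endo d) : ℕ :=
  Module.finrank ℝ (LinearMap.range (f : Euc d →ₗ[ℝ] Euc d))

/-- The proximal dimension of `S`: the minimal rank of a nonzero element of `closure(ℝ·S)`. -/
def proxDim {d : ℕ} (S : Set (Endo d)) : ℕ :=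
  sInf {r | ∃ f ∈ limPts S, f ≠ 0 ∧ rk f = r}

/-- `Π_S`: the set of elements of `closure(ℝ·S)` of rank equal to the proximal dimension. -/
def PiSet {d : ℕ} (S : Set (Endo d)) : Set (Endo d) :=
  {f | f ∈ limPts S ∧ f ≠ 0 ∧ rk f = proxDim S}

/-- The limit set of `S` in the Grassmannian `Gr(r_S, d)`: images of elements of `Π_S`. -/
def limitSet {d : ℕ} (S : Set (Endo d)) : Set (Submodule ℝ (Euc d)) :=
  (fun f : Endo d => LinearMap.range (f : Euc d →ₗ[ℝ] Euc d)) '' PiSet S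

/-- Property (S): every `(d - r_S)`-dimensional subspace is transverse to some member of the
limit set. -/
def PropS {d : ℕ} (S : Set (Endo d)) : Prop :=
  ∀ W : Submodule ℝ (Euc d), Module.finrank ℝ W = d - proxDim S →
    ∃ V ∈ limitSet S, V ⊓ W = ⊥

/-- Right multiplication by a unit, as a homeomorphism of `Endo d`. -/
def rmulHomeo {d : ℕ} (t : (Endo d)ˣ) : Endo d ≃ₜ Endo d where
  toFun := fun x => x * t.val
  invFun := fun x => x * t⁻¹.val
  left_inv := fun x => by simp [mul_assoc]
  right_inv := fun x => by simp [mul_assoc]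
  continuous_toFun := continuous_mul_right _
  continuous_invFun := continuous_mul_right _

lemma clm_smul_mul {d : ℕ} (c : ℝ) (a b : Endo d) : (c • a) * b = c • (a * b) := by
  ext x; simp [ContinuousLinearMap.mul_apply]

lemma range_mul_unit {d : ℕ} (t : (Endo d)ˣ) (f : Endo d) :
    LinearMap.range ((f * t.val : Endo d) : Euc d →ₗ[ℝ] Euc d)
      = LinearMap.range (f : Euc d →ₗ[ℝ] Euc d) := by
  have hsurj : Function.Surjective ((t.val : Endo d) : Euc d →ₗ[ℝ] Euc d) := by
    intro y
    refine ⟨t⁻¹.val y, ?_⟩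
    have h := congrArg (fun g : Endo d => g y) t.mul_inv
    simp only [ContinuousLinearMap.mul_apply, ContinuousLinearMap.one_apply] at h
    exact h
  have h2 : ((f * t.val : Endo d) : Euc d →ₗ[ℝ] Euc d)
      = (f : Euc d →ₗ[ℝ] Euc d) ∘ₗ ((t.val : Endo d) : Euc d →ₗ[ℝ] Euc d) := rfl
  rw [h2, LinearMap.range_comp_of_range_eq_top]
  exact LinearMap.range_eq_top.mpr hsurj

lemma rk_mul_unit {d : ℕ} (t : (Endo d)ˣ) (f : Endo d) : rk (f * t.val) = rk f := by
  unfold rk; rw [range_mul_unit]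

lemma mul_unit_ne_zero {d : ℕ} (t : (Endo d)ˣ) {f : Endo d} (hf : f ≠ 0) :
    f * t.val ≠ 0 := by
  intro h
  apply hf
  have : f * t.val * t⁻¹.val = 0 := by rw [h]; simp
  rwa [mul_assoc, t.mul_inv, mul_one] at this

/-- The key decomposition lemma. -/
lemma limPts_decomp {d : ℕ} (Γ Γ' : Subgroup (Endo d)ˣ) (hle : Γ' ≤ Γ)
    (hfi : Γ'.relIndex Γ ≠ 0) :
    ∃ (ι : Type) (_ : Finite ι) (t : ι → (Endo d)ˣ),
      limPts (carrierSet Γ) = ⋃ i, (fun x => x * (t i).val) '' limPts (carrierSet Γ') := by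
  set H := Γ'.subgroupOf Γ with hH
  have hfin : Finite (Γ ⧸ H) := by
    have : Nat.card (Γ ⧸ H) ≠ 0 := hfi
    exact (Nat.card_ne_zero.mp this).2
  refine ⟨Γ ⧸ H, hfin, fun q => ((Quotient.out q : Γ) : (Endo d)ˣ)⁻¹, ?_⟩
  have hset : {f | ∃ (c : ℝ) (g : Endo d), g ∈ carrierSet Γ ∧ f = c • g}
      = ⋃ q : Γ ⧸ H, (fun x => x * (((Quotient.out q : Γ) : (Endo d)ˣ)⁻¹).val) ''
        {f | ∃ (c : ℝ) (g : Endo d), g ∈ carrierSet Γ' ∧ f = c • g} := by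
    ext f
    constructor
    · rintro ⟨c, g, ⟨x, hx, rfl⟩, rfl⟩
      set xx : Γ := ⟨x, hx⟩
      set q : Γ ⧸ H := QuotientGroup.mk xx⁻¹ with hq
      have hout : (QuotientGroup.mk (Quotient.out q) : Γ ⧸ H) = QuotientGroup.mk xx⁻¹ := by
        rw [← hq]; exact Quotient.out_eq q
      have hmem : xx * Quotient.out q ∈ H := by
        rw [eq_comm, QuotientGroup.eq] at hout
        simpa using hout
      have hmem2 : ((xx * Quotient.out q : Γ) : (Endo d)ˣ) ∈ Γ' := Subgroup.mem_subgroupOf.mp hmem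
      refine Set.mem_iUnion.mpr ⟨q, ?_⟩
      refine ⟨c • ((xx * Quotient.out q : Γ) : (Endo d)ˣ).val, ⟨c, _, ⟨_, hmem2, rfl⟩, rfl⟩, ?_⟩
      show (c • ((xx * Quotient.out q : Γ) : (Endo d)ˣ).val) *
        (((Quotient.out q : Γ) : (Endo d)ˣ)⁻¹).val = c • x.val
      rw [clm_smul_mul]
      congr 1
      have : ((xx * Quotient.out q : Γ) : (Endo d)ˣ) * ((Quotient.out q : Γ) : (Endo d)ˣ)⁻¹
          = x := by
        push_cast
        rw [mul_assoc, mul_inv_cancel, mul_one]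
      calc ((xx * Quotient.out q : Γ) : (Endo d)ˣ).val *
            (((Quotient.out q : Γ) : (Endo d)ˣ)⁻¹).val
          = (((xx * Quotient.out q : Γ) : (Endo d)ˣ) *
            ((Quotient.out q : Γ) : (Endo d)ˣ)⁻¹).val := rfl
        _ = x := by rw [this]
    · rintro h
      obtain ⟨q, y, ⟨c, g, ⟨u, hu, rfl⟩, rfl⟩, rfl⟩ := Set.mem_iUnion.mp h
      refine ⟨c, (u * ((Quotient.out q : Γ) : (Endo d)ˣ)⁻¹ : (Endo d)ˣ).val,
        ⟨_, Γ.mul_mem (hle hu) (Γ.inv_mem (Quotient.out q).2), rfl⟩, ?_⟩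
      show (c • (u : Endo d)) * (((Quotient.out q : Γ) : (Endo d)ˣ)⁻¹).val
        = c • ((u * ((Quotient.out q : Γ) : (Endo d)ˣ)⁻¹ : (Endo d)ˣ) : Endo d)
      rw [clm_smul_mul]
      rfl
  unfold limPts
  rw [hset, closure_iUnion_of_finite]
  exact Set.iUnion_congr fun q =>
    ((rmulHomeo ((Quotient.out q : Γ) : (Endo d)ˣ)⁻¹).image_closure _).symm

lemma limPts_mono {d : ℕ} (Γ Γ' : Subgroup (Endo d)ˣ) (hle : Γ' ≤ Γ) :
    limPts (carrierSet Γ') ⊆ limPts (carrierSet Γ) := by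
  apply closure_mono
  rintro f ⟨c, g, ⟨u, hu, rfl⟩, rfl⟩
  exact ⟨c, _, ⟨u, hle hu, rfl⟩, rfl⟩

theorem stmt8 {d : ℕ} (Γ Γ' : Subgroup (Endo d)ˣ) (hle : Γ' ≤ Γ)
    (hfi : Γ'.relIndex Γ ≠ 0) :
    proxDim (carrierSet Γ') = proxDim (carrierSet Γ) ∧
    limitSet (carrierSet Γ') = limitSet (carrierSet Γ) ∧
    (PropS (carrierSet Γ) ↔ PropS (carrierSet Γ')) := by
  obtain ⟨ι, hfin, t, hdec⟩ := limPts_decomp Γ Γ' hle hfi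
  have hmono := limPts_mono Γ Γ' hle
  -- rank sets are equal
  have hranks : {r | ∃ f ∈ limPts (carrierSet Γ'), f ≠ 0 ∧ rk f = r}
      = {r | ∃ f ∈ limPts (carrierSet Γ), f ≠ 0 ∧ rk f = r} := by
    ext r
    constructor
    · rintro ⟨f, hf, hf0, rfl⟩
      exact ⟨f, hmono hf, hf0, rfl⟩
    · rintro ⟨f, hf, hf0, rfl⟩
      rw [hdec] at hf
      obtain ⟨i, f', hf', rfl⟩ := Set.mem_iUnion.mp hf
      have hf'0 : f' ≠ 0 := by
        rintro rfl; exact hf0 (by simp)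
      exact ⟨f', hf', hf'0, (rk_mul_unit _ _).symm⟩
  have h1 : proxDim (carrierSet Γ') = proxDim (carrierSet Γ) := by
    unfold proxDim; rw [hranks]
  have h2 : limitSet (carrierSet Γ') = limitSet (carrierSet Γ) := by
    unfold limitSet
    apply Set.Subset.antisymm
    · rintro V ⟨f, ⟨hf, hf0, hrk⟩, rfl⟩
      exact ⟨f, ⟨hmono hf, hf0, by rw [← h1]; exact hrk⟩, rfl⟩
    · rintro V ⟨f, ⟨hf, hf0, hrk⟩, rfl⟩
      rw [hdec] at hf
      obtain ⟨i, f', hf', rfl⟩ := Set.mem_iUnion.mp hf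
      have hf'0 : f' ≠ 0 := by rintro rfl; exact hf0 (by simp)
      refine ⟨f', ⟨hf', hf'0, ?_⟩, ?_⟩
      · rw [h1, ← hrk, rk_mul_unit]
      · exact (range_mul_unit _ _).symm
  refine ⟨h1, h2, ?_⟩
  unfold PropS
  rw [h1, h2]
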